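/- Let v₀, …, v_n be positive real-valued random variables and let u₁, …, u_n be random variables with values in [0,1], all on a common probability space, and define the backward Metropolis runs A₀, …, A_n and Ŷ_i := 1/A_{n−i}. Suppose each Ŷ_i is integrable, and define the Rao–Blackwellized estimators Y_i := E[Ŷ_i | v₀, …, v_n] (conditional expectation given the σ-algebra generated by the proposed weights). Then Y_i ≤ Y_{i−1} almost surely for every 1 ≤ i ≤ n. -/
import Mathlib


open MeasureTheory

/-- The Metropolis weight update: from current weight `w`, proposed weight `w'`, and
uniform draw `u`, accept the proposal iff `u ≤ min 1 (w'/w)`. -/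
noncomputable def metroF (w w' u : ℝ) : ℝ := if u ≤ min 1 (w' / w) then w' else w

/-- The chain started at index `k`, after `m` steps: `B k = v k`,
`B (k+m+1) = f (B (k+m)) (v (k+m+1)) (u (k+m+1))`. -/
noncomputable def backB (v u : ℕ → ℝ) (k : ℕ) : ℕ → ℝ
  | 0 => v k
  | m + 1 => metroF (backB v u k m) (v (k + m + 1)) (u (k + m + 1))

/-- The backward Metropolis run started at index `k ≤ n`: start at `v k` and apply the
Metropolis updates with proposals `v (k+1), …, v n` and draws `u (k+1), …, u n`; runs
started at different indices share the same pair `(v j, u j)` at each step `j`. -/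
noncomputable def backA (v u : ℕ → ℝ) (n k : ℕ) : ℝ := backB v u k (n - k)


lemma backB_pos (v u : ℕ → ℝ) (hv : ∀ k, 0 < v k) (k m : ℕ) : 0 < backB v u k m := by
  induction m with
  | zero => exact hv k
  | succ m ih =>
    show 0 < metroF _ _ _
    unfold metroF
    split
    · exact hv _
    · exact ih

lemma metroF_ge (w w' u : ℝ) (hw : 0 < w) (hu : u ≤ 1) : w' ≤ metroF w w' u := by
  unfold metroF
  split_ifs with h
  · exact le_refl _
  · push_neg at h
    have h1 : min 1 (w' / w) < 1 := lt_of_lt_of_le h hu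
    have h2 : w' / w < 1 := by
      rcases min_lt_iff.mp h1 with h' | h'
      · exact absurd h' (lt_irrefl _)
      · exact h'
    exact le_of_lt ((div_lt_one hw).mp h2)

lemma metroF_mono (w₁ w₂ w' u : ℝ) (h2 : 0 < w₂) (hle : w₂ ≤ w₁) (hw' : 0 < w')
    (hu : u ≤ 1) : metroF w₂ w' u ≤ metroF w₁ w' u := by
  have h1 : 0 < w₁ := lt_of_lt_of_le h2 hle
  unfold metroF
  split_ifs with ha hb hb
  · exact le_refl _
  · push_neg at hb
    have : min 1 (w' / w₁) < 1 := lt_of_lt_of_le hb hu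
    have h3 : w' / w₁ < 1 := by
      rcases min_lt_iff.mp this with h' | h'
      · exact absurd h' (lt_irrefl _)
      · exact h'
    exact le_of_lt ((div_lt_one h1).mp h3)
  · exfalso
    apply ha
    refine le_trans hb (min_le_min le_rfl ?_)
    exact div_le_div_of_nonneg_left (le_of_lt hw') h2 hle
  · exact hle

lemma backB_chain (v u : ℕ → ℝ) (hv : ∀ k, 0 < v k) (hu : ∀ k, u k ≤ 1) (k m : ℕ) :
    backB v u (k + 1) m ≤ backB v u k (m + 1) := by
  induction m with
  | zero =>
    show v (k + 1) ≤ metroF (v k) (v (k + 0 + 1)) (u (k + 0 + 1))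
    simpa using metroF_ge (v k) (v (k + 1)) (u (k + 1)) (hv k) (hu (k + 1))
  | succ m ih =>
    show metroF (backB v u (k+1) m) (v (k + 1 + m + 1)) (u (k + 1 + m + 1)) ≤
      metroF (backB v u k (m+1)) (v (k + (m+1) + 1)) (u (k + (m+1) + 1))
    have e : k + 1 + m + 1 = k + (m + 1) + 1 := by ring
    rw [e]
    exact metroF_mono _ _ _ _ (backB_pos v u hv (k+1) m) ih (hv _) (hu _)

/-- **Rao–Blackwellized backward estimators are nonincreasing (Lemma 4).** With
`Ŷ i = 1 / A (n - i)` and `Y i = E[Ŷ i | v 0, …, v n]` the conditional expectation given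
the σ-algebra generated by the proposed weights, `Y i ≤ Y (i-1)` almost surely for
`1 ≤ i ≤ n`. -/
theorem rbbce_nonincreasing
    {Ω : Type*} [MeasurableSpace Ω] (μ : Measure Ω) [IsProbabilityMeasure μ]
    (n : ℕ) (v u : ℕ → Ω → ℝ)
    (hvmeas : ∀ k, Measurable (v k)) (humeas : ∀ k, Measurable (u k))
    (hvpos : ∀ k ω, 0 < v k ω) (hu : ∀ k ω, u k ω ∈ Set.Icc (0 : ℝ) 1)
    (hint : ∀ i, i ≤ n → Integrable
      (fun ω => 1 / backA (fun j => v j ω) (fun j => u j ω) n (n - i)) μ)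
    (i : ℕ) (hi1 : 1 ≤ i) (hin : i ≤ n) :
    μ[fun ω => 1 / backA (fun j => v j ω) (fun j => u j ω) n (n - i)
      | MeasurableSpace.comap (fun ω (k : Fin (n + 1)) => v k ω) MeasurableSpace.pi]
      ≤ᵐ[μ]
    μ[fun ω => 1 / backA (fun j => v j ω) (fun j => u j ω) n (n - (i - 1))
      | MeasurableSpace.comap (fun ω (k : Fin (n + 1)) => v k ω) MeasurableSpace.pi] := by
  refine condExp_mono (hint i hin) (hint (i-1) (by omega)) (Filter.Eventually.of_forall ?_)
  intro ω
  set V : ℕ → ℝ := fun j => v j ω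
  set U : ℕ → ℝ := fun j => u j ω
  have hVpos : ∀ k, 0 < V k := fun k => hvpos k ω
  have hU1 : ∀ k, U k ≤ 1 := fun k => (hu k ω).2
  have e1 : n - (n - i) = i := by omega
  have e2 : n - (n - (i - 1)) = i - 1 := by omega
  have e3 : n - (i - 1) = (n - i) + 1 := by omega
  have key : backA V U n (n - (i - 1)) ≤ backA V U n (n - i) := by
    unfold backA
    rw [e1, e2, e3]
    have := backB_chain V U hVpos hU1 (n - i) (i - 1)
    rwa [Nat.sub_add_cancel hi1] at this
  have hpos : 0 < backA V U n (n - (i - 1)) := backB_pos V U hVpos _ _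
  exact one_div_le_one_div_of_le hpos key
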